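/- Let f : ℝ^p → [0,∞) be integrable with ∫ f > 0, and let h : ℝ^p → (0,∞) be a bounded measurable function such that inf_{B} h ≥ sup_{B^c} h for a measurable set B, with strict inequality h(x) > h(y) for all x ∈ B, y ∈ B^c. If 0 < ∫_B f < ∫ f and ∫ f·h > 0, then ∫_B f·h / ∫ f·h > ∫_B f / ∫ f. -/

import Mathlib

open MeasureTheory

-- auxiliary strict positivity lemma: if f ≥ 0 with positive integral on S and g > 0 on S,
-- then ∫_S f·g > 0.
lemma pos_reweight_aux {p : ℕ} (f g : (Fin p → ℝ) → ℝ)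
    (hf_nonneg : ∀ x, 0 ≤ f x)
    (S : Set (Fin p → ℝ)) (hS : MeasurableSet S)
    (hf_int : IntegrableOn f S) (hfg_int : IntegrableOn (fun x => f x * g x) S)
    (hg_pos : ∀ x ∈ S, 0 < g x) (hfS : 0 < ∫ x in S, f x) :
    0 < ∫ x in S, f x * g x := by
  have hsupp : 0 < volume (Function.support f ∩ S) := by
    rw [← setIntegral_pos_iff_support_of_nonneg_ae
      (Filter.Eventually.of_forall (fun x => hf_nonneg x)) hf_int]
    exact hfS
  have hsub : Function.support f ∩ S ⊆ Function.support (fun x => f x * g x) ∩ S := by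
    rintro x ⟨hx1, hx2⟩
    refine ⟨?_, hx2⟩
    have h1 : 0 < f x := lt_of_le_of_ne (hf_nonneg x) (Ne.symm hx1)
    exact ne_of_gt (mul_pos h1 (hg_pos x hx2))
  rw [setIntegral_pos_iff_support_of_nonneg_ae ?_ hfg_int]
  · exact lt_of_lt_of_le hsupp (measure_mono hsub)
  · filter_upwards [ae_restrict_mem hS] with x hx
    exact mul_nonneg (hf_nonneg x) (le_of_lt (hg_pos x hx))

theorem reweighting_increases_mass (p : ℕ) (f h : (Fin p → ℝ) → ℝ)
    (hf_nonneg : ∀ x, 0 ≤ f x) (hf_int : Integrable f) (hf_pos : 0 < ∫ x, f x)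
    (hh_pos : ∀ x, 0 < h x) (hh_meas : Measurable h)
    (C : ℝ) (hh_bdd : ∀ x, h x ≤ C)
    (B : Set (Fin p → ℝ)) (hB_meas : MeasurableSet B)
    (hinf_sup : ∀ x ∈ B, ∀ y ∉ B, h y < h x)
    (hB_pos : 0 < ∫ x in B, f x) (hB_lt : (∫ x in B, f x) < ∫ x, f x)
    (hfh_pos : 0 < ∫ x, f x * h x) :
    (∫ x in B, f x * h x) / (∫ x, f x * h x) > (∫ x in B, f x) / (∫ x, f x) := by
  have hfh_int : Integrable (fun x => f x * h x) := by
    have := hf_int.bdd_mul hh_meas.aestronglyMeasurable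
      (c := C) (Filter.Eventually.of_forall fun x => by rw [Real.norm_eq_abs, abs_of_pos (hh_pos x)]; exact hh_bdd x)
    exact this.congr (Filter.Eventually.of_forall (fun x => by ring))
  have hsplit_f : (∫ x in B, f x) + ∫ x in Bᶜ, f x = ∫ x, f x :=
    integral_add_compl hB_meas hf_int
  have hsplit_fh : (∫ x in B, f x * h x) + ∫ x in Bᶜ, f x * h x = ∫ x, f x * h x :=
    integral_add_compl hB_meas hfh_int
  have hBc_pos : 0 < ∫ x in Bᶜ, f x := by linarith
  have hBc_ne : Bᶜ.Nonempty := by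
    rcases Set.eq_empty_or_nonempty Bᶜ with he | hne
    · rw [he] at hBc_pos; simp at hBc_pos
    · exact hne
  set c : ℝ := sSup (h '' Bᶜ) with hc_def
  have hbdd : BddAbove (h '' Bᶜ) := ⟨C, by rintro _ ⟨y, _, rfl⟩; exact hh_bdd y⟩
  have hle_c : ∀ y ∈ Bᶜ, h y ≤ c := fun y hy => le_csSup hbdd ⟨y, hy, rfl⟩
  have hc_le : ∀ x ∈ B, c ≤ h x := by
    intro x hx
    apply csSup_le (hBc_ne.image h)
    rintro _ ⟨y, hy, rfl⟩
    exact le_of_lt (hinf_sup x hx y hy)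
  have hf_intB : IntegrableOn f B := hf_int.integrableOn
  have hf_intBc : IntegrableOn f Bᶜ := hf_int.integrableOn
  have hfh_intB : IntegrableOn (fun x => f x * h x) B := hfh_int.integrableOn
  have hfh_intBc : IntegrableOn (fun x => f x * h x) Bᶜ := hfh_int.integrableOn
  have key : (∫ x in B, f x) * (∫ x in Bᶜ, f x * h x) <
      (∫ x in B, f x * h x) * (∫ x in Bᶜ, f x) := by
    by_cases hcase : ∀ x ∈ B, c < h x
    · -- strict inequality on B, weak on Bᶜ
      have h1 : c * (∫ x in B, f x) < ∫ x in B, f x * h x := by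
        have hint : IntegrableOn (fun x => f x * (h x - c)) B := by
          have : IntegrableOn (fun x => f x * h x - f x * c) B :=
            hfh_intB.sub (hf_intB.mul_const c)
          exact this.congr_fun (fun x _ => by ring) hB_meas
        have hp := pos_reweight_aux f (fun x => h x - c) hf_nonneg B hB_meas
          hf_intB hint (fun x hx => sub_pos.mpr (hcase x hx)) hB_pos
        have heq : ∫ x in B, f x * (h x - c)
            = (∫ x in B, f x * h x) - c * ∫ x in B, f x := by
          have e1 : ∫ x in B, f x * (h x - c) = ∫ x in B, (f x * h x - f x * c) := by
            apply setIntegral_congr_fun hB_meas; intro x _; ring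
          rw [e1, integral_sub hfh_intB (hf_intB.mul_const c), integral_mul_const]
          ring
        linarith [heq ▸ hp]
      have h2 : (∫ x in Bᶜ, f x * h x) ≤ c * ∫ x in Bᶜ, f x := by
        have := setIntegral_mono_on hfh_intBc (hf_intBc.mul_const c) hB_meas.compl
          (fun x hx => mul_le_mul_of_nonneg_left (hle_c x hx) (hf_nonneg x))
        rwa [integral_mul_const, mul_comm] at this
      nlinarith
    · -- some point of B has h ≤ c, so h < c strictly on Bᶜ
      push_neg at hcase
      obtain ⟨x₀, hx₀B, hx₀⟩ := hcase
      have hlt_c : ∀ y ∈ Bᶜ, h y < c :=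
        fun y hy => lt_of_lt_of_le (hinf_sup x₀ hx₀B y hy) hx₀
      have h1 : (∫ x in Bᶜ, f x * h x) < c * ∫ x in Bᶜ, f x := by
        have hint : IntegrableOn (fun x => f x * (c - h x)) Bᶜ := by
          have : IntegrableOn (fun x => f x * c - f x * h x) Bᶜ :=
            (hf_intBc.mul_const c).sub hfh_intBc
          exact this.congr_fun (fun x _ => by ring) hB_meas.compl
        have hp := pos_reweight_aux f (fun x => c - h x) hf_nonneg Bᶜ hB_meas.compl
          hf_intBc hint (fun x hx => sub_pos.mpr (hlt_c x hx)) hBc_pos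
        have heq : ∫ x in Bᶜ, f x * (c - h x)
            = c * (∫ x in Bᶜ, f x) - ∫ x in Bᶜ, f x * h x := by
          have e1 : ∫ x in Bᶜ, f x * (c - h x) = ∫ x in Bᶜ, (f x * c - f x * h x) := by
            apply setIntegral_congr_fun hB_meas.compl; intro x _; ring
          rw [e1, integral_sub (hf_intBc.mul_const c) hfh_intBc, integral_mul_const]
          ring
        linarith [heq ▸ hp]
      have h2 : c * (∫ x in B, f x) ≤ ∫ x in B, f x * h x := by
        have := setIntegral_mono_on (hf_intB.mul_const c) hfh_intB hB_meas
          (fun x hx => mul_le_mul_of_nonneg_left (hc_le x hx) (hf_nonneg x))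
        rwa [integral_mul_const, mul_comm] at this
      nlinarith
  rw [gt_iff_lt, div_lt_div_iff₀ hf_pos hfh_pos, ← hsplit_f, ← hsplit_fh]
  nlinarith [key]
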